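/- Let α ≥ 0 and q(x) = c₀ + c₁x + ⋯ + c_r x^r with r ≥ 1 and c_r ≠ 0. Suppose B = {b_k}_{k=0}^∞ is a simple set of real polynomials (deg b_k = k) satisfying γ_n b_n(x) = q(x) b_n^{(r)}(x) + α q'(x) b_n^{(r−1)}(x) for all n, where {γ_n} are real numbers. Then γ_n = c_r · n!·(n + (α−1)r + 1)/(n−r+1)! for all n ≥ r−1, and γ_n = 0 for n < r−1. -/

import Mathlib

open Polynomial Finset

open scoped Classical in
/-- Number of non-real complex zeros of a real polynomial, counted with multiplicity. -/
noncomputable def ZC (p : Polynomial ℝ) : ℕ :=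
  (((p.map (algebraMap ℝ ℂ)).roots).filter (fun z => z.im ≠ 0)).card

/-- Number of real zeros of a real polynomial, counted with multiplicity. -/
noncomputable def ZR (p : Polynomial ℝ) : ℕ := p.roots.card

private lemma aux_coeff_mul (p s : Polynomial ℝ) (k n : ℕ) (hp : p.natDegree ≤ k)
    (hs : s.natDegree ≤ n) :
    (p * derivative^[k] s).coeff n = p.coeff k * ((n.descFactorial k : ℝ) * s.coeff n) := by
  rcases le_or_gt k n with h | h
  · have hb : (derivative^[k] s).natDegree ≤ n - k :=
      (natDegree_iterate_derivative s k).trans (by omega)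
    have h2 := coeff_mul_add_eq_of_natDegree_le hp hb
    rw [show k + (n - k) = n by omega] at h2
    rw [h2, coeff_iterate_derivative, show n - k + k = n by omega, nsmul_eq_mul]
  · rw [iterate_derivative_eq_zero (lt_of_le_of_lt hs h), mul_zero, coeff_zero,
      Nat.descFactorial_eq_zero_iff_lt.2 h]
    simp

theorem stmt17 (α : ℝ) (hα : 0 ≤ α) (r : ℕ) (hr : 1 ≤ r)
    (q : Polynomial ℝ) (hq : q.degree = r)
    (b : ℕ → Polynomial ℝ) (hdeg : ∀ n, (b n).degree = n)
    (γ : ℕ → ℝ)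
    (hde : ∀ n, C (γ n) * b n
        = q * derivative^[r] (b n) + C α * derivative q * derivative^[r - 1] (b n)) :
    (∀ n, r - 1 ≤ n →
        γ n = q.coeff r * ((n.factorial : ℝ) * ((n : ℝ) + (α - 1) * r + 1)
                / ((n + 1 - r).factorial : ℝ)))
    ∧ (∀ n, n < r - 1 → γ n = 0) := by
  have hqnd : q.natDegree = r := natDegree_eq_of_degree_eq_some hq
  have key : ∀ n, γ n = q.coeff r * ((n.descFactorial r : ℝ)
      + α * r * (n.descFactorial (r - 1) : ℝ)) := by
    intro n
    have hbn : (b n).natDegree = n := natDegree_eq_of_degree_eq_some (hdeg n)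
    have hne : b n ≠ 0 := fun h0 => by simpa [h0] using hdeg n
    have hl : (b n).coeff n ≠ 0 := by
      have := leadingCoeff_ne_zero.mpr hne
      rwa [Polynomial.leadingCoeff, hbn] at this
    have h := congrArg (fun p => p.coeff n) (hde n)
    simp only [coeff_add, coeff_C_mul] at h
    rw [aux_coeff_mul q (b n) r n hqnd.le hbn.le,
      aux_coeff_mul (C α * derivative q) (b n) (r - 1) n
        ((natDegree_C_mul_le _ _).trans ((natDegree_derivative_le q).trans (by omega))) hbn.le,
      coeff_C_mul, coeff_derivative, show r - 1 + 1 = r by omega] at h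
    have hcast : ((r - 1 : ℕ) : ℝ) + 1 = (r : ℝ) := by
      have : ((r - 1 : ℕ) : ℝ) = (r : ℝ) - 1 := by
        push_cast [Nat.cast_sub hr]; ring
      rw [this]; ring
    rw [hcast] at h
    have := mul_right_cancel₀ hl (by linarith [h] : γ n * (b n).coeff n
      = (q.coeff r * ((n.descFactorial r : ℝ) + α * r * (n.descFactorial (r - 1) : ℝ)))
        * (b n).coeff n)
    exact this
  constructor
  · intro n hn
    have hr' : r ≤ n + 1 := by omega
    have e1 : ((n + 1 - r).factorial : ℝ) * (n.descFactorial (r - 1) : ℝ) = n.factorial := by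
      have := Nat.factorial_mul_descFactorial (show r - 1 ≤ n from hn)
      rw [show n - (r - 1) = n + 1 - r by omega] at this
      exact_mod_cast this
    have e2 : ((n.descFactorial r : ℝ)) = ((n + 1 - r : ℕ) : ℝ) * (n.descFactorial (r - 1)) := by
      have : n.descFactorial (r - 1 + 1) = (n - (r - 1)) * n.descFactorial (r - 1) :=
        Nat.descFactorial_succ n (r - 1)
      rw [show r - 1 + 1 = r by omega, show n - (r - 1) = n + 1 - r by omega] at this
      exact_mod_cast this
    have e3 : ((n + 1 - r : ℕ) : ℝ) = (n : ℝ) + 1 - r := by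
      push_cast [Nat.cast_sub hr']; ring
    have hfac : ((n + 1 - r).factorial : ℝ) ≠ 0 := by
      exact_mod_cast (Nat.factorial_pos _).ne'
    rw [key n, e2, e3, ← e1]
    field_simp
    ring
  · intro n hn
    rw [key n, Nat.descFactorial_eq_zero_iff_lt.2 (by omega : n < r),
      Nat.descFactorial_eq_zero_iff_lt.2 (by omega : n < r - 1)]
    simp
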